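/- If {v^1_{h_1}, …, v^k_{h_k}} (with h_i ∈ [p] for each i) is a multicolored clique in G, then the set F = {z^1_{h_1}, …, z^k_{h_k}} ∪ {r^{(i,j)}_{h_i,h_j} : 1 ≤ i < j ≤ k} ∪ A ∪ {β} has exactly k' = 3k + 3·C(k,2) + 1 vertices and the induced subgraph G'[F] is a tree (connected and acyclic); in particular G' has an induced forest on k' vertices. -/

import Mathlib

/-- Vertex names for the graph `G'` built from a Multicolored Clique instance. -/
inductive MV (k p : ℕ) : Type where
  | z : Fin k → Fin p → MV k p
  | r : Fin k → Fin k → Fin p → Fin p → MV k p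
  | ax : Fin k → MV k p
  | ay : Fin k → MV k p
  | bx : Fin k → Fin k → MV k p
  | byy : Fin k → Fin k → MV k p
  | beta : MV k p

/-- Which vertex names actually occur as vertices of `G'`. -/
def MVValid {k p : ℕ} (G : SimpleGraph (Fin k × Fin p)) : MV k p → Prop
  | MV.r i j s t => i < j ∧ G.Adj (i, s) (j, t)
  | MV.bx i j => i < j
  | MV.byy i j => i < j
  | _ => True

/-- The vertex set of `G'`. -/
abbrev MVert (k p : ℕ) (G : SimpleGraph (Fin k × Fin p)) : Type :=
  {v : MV k p // MVValid G v}

/-- One direction of the adjacency relation of `G'` (it is symmetrized below). -/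
def MVAdj {k p : ℕ} : MV k p → MV k p → Prop
  | MV.z i s, MV.z i' s' => i = i' ∧ s ≠ s'
  | MV.r i j s t, MV.r i' j' s' t' => i = i' ∧ j = j' ∧ (s ≠ s' ∨ t ≠ t')
  | MV.z i h, MV.r i' j' s t => (i = i' ∧ h ≠ s) ∨ (i = j' ∧ h ≠ t)
  | MV.ax i, MV.z i' _ => i = i'
  | MV.ay i, MV.z i' _ => i = i'
  | MV.bx i j, MV.r i' j' _ _ => i = i' ∧ j = j'
  | MV.byy i j, MV.r i' j' _ _ => i = i' ∧ j = j'
  | MV.beta, MV.z _ _ => True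
  | MV.beta, MV.r _ _ _ _ => True
  | _, _ => False

/-- The graph `G'`. -/
def Gp {k p : ℕ} (G : SimpleGraph (Fin k × Fin p)) : SimpleGraph (MVert k p G) :=
  SimpleGraph.fromRel (fun a b => MVAdj a.1 b.1)

/-- The set `Z(i)`. -/
def Zset {k p : ℕ} (G : SimpleGraph (Fin k × Fin p)) (i : Fin k) : Set (MVert k p G) :=
  {v | ∃ s, v.1 = MV.z i s}

/-- The set `R(i,j)`. -/
def Rset {k p : ℕ} (G : SimpleGraph (Fin k × Fin p)) (i j : Fin k) : Set (MVert k p G) :=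
  {v | ∃ s t, v.1 = MV.r i j s t}

/-- The set `Z_{+α}(i)`. -/
def ZAset {k p : ℕ} (G : SimpleGraph (Fin k × Fin p)) (i : Fin k) : Set (MVert k p G) :=
  Zset G i ∪ {v | v.1 = MV.ax i ∨ v.1 = MV.ay i}

/-- The set `R_{+α}(i,j)`. -/
def RAset {k p : ℕ} (G : SimpleGraph (Fin k × Fin p)) (i j : Fin k) : Set (MVert k p G) :=
  Rset G i j ∪ {v | v.1 = MV.bx i j ∨ v.1 = MV.byy i j}

/-- The set `A` of all `α`-vertices. -/
def Aset {k p : ℕ} (G : SimpleGraph (Fin k × Fin p)) : Set (MVert k p G) :=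
  {v | (∃ i, v.1 = MV.ax i ∨ v.1 = MV.ay i) ∨ (∃ i j, v.1 = MV.bx i j ∨ v.1 = MV.byy i j)}

/-- `F` is an induced forest in `G'`: the induced subgraph has no cycle. -/
def IsInducedForest {k p : ℕ} (G : SimpleGraph (Fin k × Fin p))
    (F : Set (MVert k p G)) : Prop :=
  ((Gp G).induce F).IsAcyclic

@[simp] lemma mvadj_z_z {k p : ℕ} (i : Fin k) (s : Fin p) (i' : Fin k) (s' : Fin p) :
    MVAdj (MV.z i s : MV k p) (MV.z i' s') = (i = i' ∧ s ≠ s') := rfl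

@[simp] lemma mvadj_z_r {k p : ℕ} (i : Fin k) (s : Fin p) (i' j' : Fin k) (s' t' : Fin p) :
    MVAdj (MV.z i s : MV k p) (MV.r i' j' s' t') = ((i = i' ∧ s ≠ s') ∨ (i = j' ∧ s ≠ t')) := rfl

@[simp] lemma mvadj_z_ax {k p : ℕ} (i : Fin k) (s : Fin p) (i' : Fin k) :
    MVAdj (MV.z i s : MV k p) (MV.ax i') = False := rfl

@[simp] lemma mvadj_z_ay {k p : ℕ} (i : Fin k) (s : Fin p) (i' : Fin k) :
    MVAdj (MV.z i s : MV k p) (MV.ay i') = False := rfl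

@[simp] lemma mvadj_z_bx {k p : ℕ} (i : Fin k) (s : Fin p) (i' j' : Fin k) :
    MVAdj (MV.z i s : MV k p) (MV.bx i' j') = False := rfl

@[simp] lemma mvadj_z_byy {k p : ℕ} (i : Fin k) (s : Fin p) (i' j' : Fin k) :
    MVAdj (MV.z i s : MV k p) (MV.byy i' j') = False := rfl

@[simp] lemma mvadj_z_beta {k p : ℕ} (i : Fin k) (s : Fin p) :
    MVAdj (MV.z i s : MV k p) (MV.beta) = False := rfl

@[simp] lemma mvadj_r_z {k p : ℕ} (i j : Fin k) (s t : Fin p) (i' : Fin k) (s' : Fin p) :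
    MVAdj (MV.r i j s t : MV k p) (MV.z i' s') = False := rfl

@[simp] lemma mvadj_r_r {k p : ℕ} (i j : Fin k) (s t : Fin p) (i' j' : Fin k) (s' t' : Fin p) :
    MVAdj (MV.r i j s t : MV k p) (MV.r i' j' s' t') = (i = i' ∧ j = j' ∧ (s ≠ s' ∨ t ≠ t')) := rfl

@[simp] lemma mvadj_r_ax {k p : ℕ} (i j : Fin k) (s t : Fin p) (i' : Fin k) :
    MVAdj (MV.r i j s t : MV k p) (MV.ax i') = False := rfl

@[simp] lemma mvadj_r_ay {k p : ℕ} (i j : Fin k) (s t : Fin p) (i' : Fin k) :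
    MVAdj (MV.r i j s t : MV k p) (MV.ay i') = False := rfl

@[simp] lemma mvadj_r_bx {k p : ℕ} (i j : Fin k) (s t : Fin p) (i' j' : Fin k) :
    MVAdj (MV.r i j s t : MV k p) (MV.bx i' j') = False := rfl

@[simp] lemma mvadj_r_byy {k p : ℕ} (i j : Fin k) (s t : Fin p) (i' j' : Fin k) :
    MVAdj (MV.r i j s t : MV k p) (MV.byy i' j') = False := rfl

@[simp] lemma mvadj_r_beta {k p : ℕ} (i j : Fin k) (s t : Fin p) :
    MVAdj (MV.r i j s t : MV k p) (MV.beta) = False := rfl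

@[simp] lemma mvadj_ax_z {k p : ℕ} (i : Fin k) (i' : Fin k) (s' : Fin p) :
    MVAdj (MV.ax i : MV k p) (MV.z i' s') = (i = i') := rfl

@[simp] lemma mvadj_ax_r {k p : ℕ} (i : Fin k) (i' j' : Fin k) (s' t' : Fin p) :
    MVAdj (MV.ax i : MV k p) (MV.r i' j' s' t') = False := rfl

@[simp] lemma mvadj_ax_ax {k p : ℕ} (i : Fin k) (i' : Fin k) :
    MVAdj (MV.ax i : MV k p) (MV.ax i') = False := rfl

@[simp] lemma mvadj_ax_ay {k p : ℕ} (i : Fin k) (i' : Fin k) :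
    MVAdj (MV.ax i : MV k p) (MV.ay i') = False := rfl

@[simp] lemma mvadj_ax_bx {k p : ℕ} (i : Fin k) (i' j' : Fin k) :
    MVAdj (MV.ax i : MV k p) (MV.bx i' j') = False := rfl

@[simp] lemma mvadj_ax_byy {k p : ℕ} (i : Fin k) (i' j' : Fin k) :
    MVAdj (MV.ax i : MV k p) (MV.byy i' j') = False := rfl

@[simp] lemma mvadj_ax_beta {k p : ℕ} (i : Fin k) :
    MVAdj (MV.ax i : MV k p) (MV.beta) = False := rfl

@[simp] lemma mvadj_ay_z {k p : ℕ} (i : Fin k) (i' : Fin k) (s' : Fin p) :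
    MVAdj (MV.ay i : MV k p) (MV.z i' s') = (i = i') := rfl

@[simp] lemma mvadj_ay_r {k p : ℕ} (i : Fin k) (i' j' : Fin k) (s' t' : Fin p) :
    MVAdj (MV.ay i : MV k p) (MV.r i' j' s' t') = False := rfl

@[simp] lemma mvadj_ay_ax {k p : ℕ} (i : Fin k) (i' : Fin k) :
    MVAdj (MV.ay i : MV k p) (MV.ax i') = False := rfl

@[simp] lemma mvadj_ay_ay {k p : ℕ} (i : Fin k) (i' : Fin k) :
    MVAdj (MV.ay i : MV k p) (MV.ay i') = False := rfl

@[simp] lemma mvadj_ay_bx {k p : ℕ} (i : Fin k) (i' j' : Fin k) :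
    MVAdj (MV.ay i : MV k p) (MV.bx i' j') = False := rfl

@[simp] lemma mvadj_ay_byy {k p : ℕ} (i : Fin k) (i' j' : Fin k) :
    MVAdj (MV.ay i : MV k p) (MV.byy i' j') = False := rfl

@[simp] lemma mvadj_ay_beta {k p : ℕ} (i : Fin k) :
    MVAdj (MV.ay i : MV k p) (MV.beta) = False := rfl

@[simp] lemma mvadj_bx_z {k p : ℕ} (i j : Fin k) (i' : Fin k) (s' : Fin p) :
    MVAdj (MV.bx i j : MV k p) (MV.z i' s') = False := rfl

@[simp] lemma mvadj_bx_r {k p : ℕ} (i j : Fin k) (i' j' : Fin k) (s' t' : Fin p) :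
    MVAdj (MV.bx i j : MV k p) (MV.r i' j' s' t') = (i = i' ∧ j = j') := rfl

@[simp] lemma mvadj_bx_ax {k p : ℕ} (i j : Fin k) (i' : Fin k) :
    MVAdj (MV.bx i j : MV k p) (MV.ax i') = False := rfl

@[simp] lemma mvadj_bx_ay {k p : ℕ} (i j : Fin k) (i' : Fin k) :
    MVAdj (MV.bx i j : MV k p) (MV.ay i') = False := rfl

@[simp] lemma mvadj_bx_bx {k p : ℕ} (i j : Fin k) (i' j' : Fin k) :
    MVAdj (MV.bx i j : MV k p) (MV.bx i' j') = False := rfl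

@[simp] lemma mvadj_bx_byy {k p : ℕ} (i j : Fin k) (i' j' : Fin k) :
    MVAdj (MV.bx i j : MV k p) (MV.byy i' j') = False := rfl

@[simp] lemma mvadj_bx_beta {k p : ℕ} (i j : Fin k) :
    MVAdj (MV.bx i j : MV k p) (MV.beta) = False := rfl

@[simp] lemma mvadj_byy_z {k p : ℕ} (i j : Fin k) (i' : Fin k) (s' : Fin p) :
    MVAdj (MV.byy i j : MV k p) (MV.z i' s') = False := rfl

@[simp] lemma mvadj_byy_r {k p : ℕ} (i j : Fin k) (i' j' : Fin k) (s' t' : Fin p) :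
    MVAdj (MV.byy i j : MV k p) (MV.r i' j' s' t') = (i = i' ∧ j = j') := rfl

@[simp] lemma mvadj_byy_ax {k p : ℕ} (i j : Fin k) (i' : Fin k) :
    MVAdj (MV.byy i j : MV k p) (MV.ax i') = False := rfl

@[simp] lemma mvadj_byy_ay {k p : ℕ} (i j : Fin k) (i' : Fin k) :
    MVAdj (MV.byy i j : MV k p) (MV.ay i') = False := rfl

@[simp] lemma mvadj_byy_bx {k p : ℕ} (i j : Fin k) (i' j' : Fin k) :
    MVAdj (MV.byy i j : MV k p) (MV.bx i' j') = False := rfl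

@[simp] lemma mvadj_byy_byy {k p : ℕ} (i j : Fin k) (i' j' : Fin k) :
    MVAdj (MV.byy i j : MV k p) (MV.byy i' j') = False := rfl

@[simp] lemma mvadj_byy_beta {k p : ℕ} (i j : Fin k) :
    MVAdj (MV.byy i j : MV k p) (MV.beta) = False := rfl

@[simp] lemma mvadj_beta_z {k p : ℕ} (i' : Fin k) (s' : Fin p) :
    MVAdj (MV.beta : MV k p) (MV.z i' s') = True := rfl

@[simp] lemma mvadj_beta_r {k p : ℕ} (i' j' : Fin k) (s' t' : Fin p) :
    MVAdj (MV.beta : MV k p) (MV.r i' j' s' t') = True := rfl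

@[simp] lemma mvadj_beta_ax {k p : ℕ} (i' : Fin k) :
    MVAdj (MV.beta : MV k p) (MV.ax i') = False := rfl

@[simp] lemma mvadj_beta_ay {k p : ℕ} (i' : Fin k) :
    MVAdj (MV.beta : MV k p) (MV.ay i') = False := rfl

@[simp] lemma mvadj_beta_bx {k p : ℕ} (i' j' : Fin k) :
    MVAdj (MV.beta : MV k p) (MV.bx i' j') = False := rfl

@[simp] lemma mvadj_beta_byy {k p : ℕ} (i' j' : Fin k) :
    MVAdj (MV.beta : MV k p) (MV.byy i' j') = False := rfl

@[simp] lemma mvadj_beta_beta {k p : ℕ} :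
    MVAdj (MV.beta : MV k p) (MV.beta) = False := rfl

/-! ### Auxiliary machinery -/

open SimpleGraph Walk

lemma head_ne_getLast_of_nodup {α : Type*} {l : List α} (hl : l.Nodup) (h2 : 2 ≤ l.length)
    (hne : l ≠ []) : l.head hne ≠ l.getLast hne := by
  intro heq
  have h0 : l.head hne = l.get ⟨0, by omega⟩ := by
    cases l with | nil => simp at hne | cons a t => rfl
  have h1 : l.getLast hne = l.get ⟨l.length - 1, by omega⟩ := by rw [List.getLast_eq_getElem]; rfl
  rw [h0, h1] at heq
  have := List.Nodup.get_inj_iff hl |>.mp heq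
  simp at this
  omega

lemma acyclic_of_rank {V : Type*} {H : SimpleGraph V} (ρ : V → ℕ)
    (h1 : ∀ u v, H.Adj u v → ρ u ≠ ρ v)
    (h2 : ∀ u v w, H.Adj u v → H.Adj u w → ρ v < ρ u → ρ w < ρ u → v = w) :
    H.IsAcyclic := by
  classical
  intro x c hc
  obtain ⟨u, hu, hmax⟩ : ∃ u ∈ c.support, ∀ w ∈ c.support, ρ w ≤ ρ u := by
    obtain ⟨u, hu, hmax⟩ := (c.support.toFinset).exists_max_image ρ
      ⟨x, by simp [Walk.start_mem_support]⟩
    exact ⟨u, by simpa using hu, fun w hw => hmax w (by simpa using hw)⟩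
  set c' := c.rotate u hu with hc'def
  have hc' : c'.IsCycle := (isCycle_rotate hu).mpr hc
  have hlen : 3 ≤ c'.length := hc'.three_le_length
  have hdne : c'.darts ≠ [] := by
    intro hnil
    have h0 : c'.darts.length = 0 := by rw [hnil]; rfl
    rw [Walk.length_darts] at h0; omega
  set d1 := c'.darts.head hdne with hd1
  set d2 := c'.darts.getLast hdne with hd2
  have hfst : d1.fst = u := by rw [hd1, head_darts_eq_firstDart]; rfl
  have hsnd : d2.snd = u := by rw [hd2, getLast_darts_eq_lastDart]; rfl
  have hmem : ∀ w ∈ c'.support, w ∈ c.support := by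
    intro w hw
    have hperm := support_rotate c u hu
    rcases List.mem_cons.mp ((support_eq_cons c').symm ▸ hw) with rfl | hw'
    · exact hu
    · exact List.mem_of_mem_tail (hperm.mem_iff.mp hw')
  have m1 : d1.snd ∈ c.support :=
    hmem _ (dart_snd_mem_support_of_mem_darts _ (List.head_mem hdne))
  have m2 : d2.fst ∈ c.support :=
    hmem _ (dart_fst_mem_support_of_mem_darts _ (List.getLast_mem hdne))
  have a1 : H.Adj u d1.snd := hfst ▸ d1.adj
  have a2 : H.Adj u d2.fst := (hsnd ▸ d2.adj).symm
  have r1 : ρ d1.snd < ρ u := lt_of_le_of_ne (hmax _ m1) (fun e => h1 _ _ a1 e.symm)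
  have r2 : ρ d2.fst < ρ u := lt_of_le_of_ne (hmax _ m2) (fun e => h1 _ _ a2 e.symm)
  have heq : d1.snd = d2.fst := h2 u _ _ a1 a2 r1 r2
  have hene : c'.edges ≠ [] := by
    intro hnil
    have h0 : c'.edges.length = 0 := by rw [hnil]; rfl
    rw [Walk.length_edges] at h0; omega
  have hedef : c'.edges = c'.darts.map SimpleGraph.Dart.edge := rfl
  have he1 : c'.edges.head hene = d1.edge := by
    simp only [hedef]; rw [List.head_map]
  have he2 : c'.edges.getLast hene = d2.edge := by
    simp only [hedef]; rw [List.getLast_map]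
  have hp1 : d1.toProd = (u, d1.snd) := Prod.ext hfst rfl
  have hp2 : d2.toProd = (d2.fst, u) := Prod.ext rfl hsnd
  have hedeq : d1.edge = d2.edge := by
    show s(d1.fst, d1.snd) = s(d2.fst, d2.snd)
    rw [hfst, hsnd, heq, Sym2.eq_swap]
  have hnodup : c'.edges.Nodup := hc'.edges_nodup
  exact head_ne_getLast_of_nodup hnodup
    (by rw [Walk.length_edges]; omega) hene (by rw [he1, he2, hedeq])

/-- Ranks of the vertex names. -/
def mrank {k p : ℕ} : MV k p → ℕ
  | MV.beta => 0
  | MV.z _ _ => 1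
  | MV.r _ _ _ _ => 1
  | MV.ax _ => 2
  | MV.ay _ => 2
  | MV.bx _ _ => 2
  | MV.byy _ _ => 2

@[simp] lemma mrank_z {k p : ℕ} (i : Fin k) (s : Fin p) : mrank (MV.z i s) = 1 := rfl
@[simp] lemma mrank_r {k p : ℕ} (i j : Fin k) (s t : Fin p) : mrank (MV.r i j s t) = 1 := rfl
@[simp] lemma mrank_ax {k p : ℕ} (i : Fin k) : mrank (MV.ax i : MV k p) = 2 := rfl
@[simp] lemma mrank_ay {k p : ℕ} (i : Fin k) : mrank (MV.ay i : MV k p) = 2 := rfl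
@[simp] lemma mrank_bx {k p : ℕ} (i j : Fin k) : mrank (MV.bx i j : MV k p) = 2 := rfl
@[simp] lemma mrank_byy {k p : ℕ} (i j : Fin k) : mrank (MV.byy i j : MV k p) = 2 := rfl
@[simp] lemma mrank_beta {k p : ℕ} : mrank (MV.beta : MV k p) = 0 := rfl

/-- Parent map on vertex names. -/
def mpar {k p : ℕ} (h : Fin k → Fin p) : MV k p → MV k p
  | MV.ax i => MV.z i (h i)
  | MV.ay i => MV.z i (h i)
  | MV.bx i j => MV.r i j (h i) (h j)
  | MV.byy i j => MV.r i j (h i) (h j)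
  | MV.z _ _ => MV.beta
  | MV.r _ _ _ _ => MV.beta
  | MV.beta => MV.beta

@[simp] lemma mpar_z {k p : ℕ} (h : Fin k → Fin p) (i : Fin k) (s : Fin p) :
    mpar h (MV.z i s) = MV.beta := rfl
@[simp] lemma mpar_r {k p : ℕ} (h : Fin k → Fin p) (i j : Fin k) (s t : Fin p) :
    mpar h (MV.r i j s t) = MV.beta := rfl
@[simp] lemma mpar_ax {k p : ℕ} (h : Fin k → Fin p) (i : Fin k) :
    mpar h (MV.ax i) = MV.z i (h i) := rfl
@[simp] lemma mpar_ay {k p : ℕ} (h : Fin k → Fin p) (i : Fin k) :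
    mpar h (MV.ay i) = MV.z i (h i) := rfl
@[simp] lemma mpar_bx {k p : ℕ} (h : Fin k → Fin p) (i j : Fin k) :
    mpar h (MV.bx i j) = MV.r i j (h i) (h j) := rfl
@[simp] lemma mpar_byy {k p : ℕ} (h : Fin k → Fin p) (i j : Fin k) :
    mpar h (MV.byy i j) = MV.r i j (h i) (h j) := rfl

/-- Strictly increasing pairs. -/
abbrev Spair (k : ℕ) := {q : Fin k × Fin k // q.1 < q.2}

def spairEquiv (k : ℕ) : Spair k ≃ Σ j : Fin k, Fin j.1 where
  toFun q := ⟨q.1.2, ⟨q.1.1.1, q.2⟩⟩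
  invFun x := ⟨(⟨x.2.1, lt_trans x.2.2 x.1.2⟩, x.1), x.2.2⟩
  left_inv := by rintro ⟨⟨⟨a, ha⟩, ⟨b, hb⟩⟩, hab⟩; rfl
  right_inv := by rintro ⟨⟨a, ha⟩, ⟨b, hb⟩⟩; rfl

lemma card_Spair (k : ℕ) : Fintype.card (Spair k) = k.choose 2 := by
  rw [Fintype.card_congr (spairEquiv k), Fintype.card_sigma]
  simp only [Fintype.card_fin]
  rw [Fin.sum_univ_eq_sum_range (fun i => i) k, Finset.sum_range_id, Nat.choose_two_right]

/-- Index type for the vertices of the tree `F`. -/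
abbrev Tidx (k : ℕ) : Type :=
  (Fin k ⊕ Fin k ⊕ Fin k) ⊕ (Spair k ⊕ Spair k ⊕ Spair k) ⊕ PUnit

lemma card_Tidx (k : ℕ) : Fintype.card (Tidx k) = 3 * k + 3 * Nat.choose k 2 + 1 := by
  simp [Fintype.card_sum, Fintype.card_fin, card_Spair]
  ring

/-- The enumeration of the vertices of `F`. -/
def gfun {k p : ℕ} (G : SimpleGraph (Fin k × Fin p)) (h : Fin k → Fin p)
    (hcl : ∀ q : Spair k, G.Adj (q.1.1, h q.1.1) (q.1.2, h q.1.2)) :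
    Tidx k → MVert k p G
  | Sum.inl (Sum.inl i) => ⟨MV.z i (h i), ⟨⟩⟩
  | Sum.inl (Sum.inr (Sum.inl i)) => ⟨MV.ax i, ⟨⟩⟩
  | Sum.inl (Sum.inr (Sum.inr i)) => ⟨MV.ay i, ⟨⟩⟩
  | Sum.inr (Sum.inl (Sum.inl q)) => ⟨MV.r q.1.1 q.1.2 (h q.1.1) (h q.1.2), ⟨q.2, hcl q⟩⟩
  | Sum.inr (Sum.inl (Sum.inr (Sum.inl q))) => ⟨MV.bx q.1.1 q.1.2, q.2⟩
  | Sum.inr (Sum.inl (Sum.inr (Sum.inr q))) => ⟨MV.byy q.1.1 q.1.2, q.2⟩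
  | Sum.inr (Sum.inr _) => ⟨MV.beta, ⟨⟩⟩

lemma gfun_injective {k p : ℕ} (G : SimpleGraph (Fin k × Fin p)) (h : Fin k → Fin p)
    (hcl : ∀ q : Spair k, G.Adj (q.1.1, h q.1.1) (q.1.2, h q.1.2)) :
    Function.Injective (gfun G h hcl) := by
  rintro a b hab
  rcases a with (i | i | i) | (q | q | q) | u <;>
    rcases b with (i' | i' | i') | (q' | q' | q') | u' <;>
      simp_all [gfun, Subtype.ext_iff, Prod.ext_iff]

section StructureLemmas

variable {k p : ℕ} {G : SimpleGraph (Fin k × Fin p)} {h : Fin k → Fin p}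
  {F : Set (MVert k p G)}

/-- Every vertex of `F` has one of seven shapes. -/
def GoodShape (G : SimpleGraph (Fin k × Fin p)) (h : Fin k → Fin p)
    (F : Set (MVert k p G)) : Prop :=
  ∀ v : ↥F,
    (∃ i, v.1.1 = MV.z i (h i)) ∨ (∃ i j, i < j ∧ v.1.1 = MV.r i j (h i) (h j)) ∨
    (∃ i, v.1.1 = MV.ax i) ∨ (∃ i, v.1.1 = MV.ay i) ∨
    (∃ i j, i < j ∧ v.1.1 = MV.bx i j) ∨ (∃ i j, i < j ∧ v.1.1 = MV.byy i j) ∨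
    v.1.1 = MV.beta

lemma induce_adj_iff (a b : ↥F) : ((Gp G).induce F).Adj a b ↔
    (a.1.1 ≠ b.1.1 ∧ (MVAdj a.1.1 b.1.1 ∨ MVAdj b.1.1 a.1.1)) := by
  rw [SimpleGraph.comap_adj, Gp, SimpleGraph.fromRel_adj]
  constructor
  · rintro ⟨h1, h2⟩; exact ⟨fun e => h1 (Subtype.ext e), h2⟩
  · rintro ⟨h1, h2⟩; exact ⟨fun e => h1 (congrArg Subtype.val e), h2⟩

set_option maxHeartbeats 1000000 in
lemma aux_hdiff (shape : GoodShape G h F) :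
    ∀ a b : ↥F, ((Gp G).induce F).Adj a b → mrank a.1.1 ≠ mrank b.1.1 := by
  intro a b hab
  rw [induce_adj_iff] at hab
  obtain ⟨hne, hadj⟩ := hab
  have ha' := shape a
  have hb' := shape b
  clear shape
  rcases ha' with ⟨i, ha⟩ | ⟨i, j, hij, ha⟩ | ⟨i, ha⟩ | ⟨i, ha⟩ |
    ⟨i, j, hij, ha⟩ | ⟨i, j, hij, ha⟩ | ha <;>
  rcases hb' with ⟨i', hb⟩ | ⟨i', j', hij', hb⟩ | ⟨i', hb⟩ | ⟨i', hb⟩ |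
    ⟨i', j', hij', hb⟩ | ⟨i', j', hij', hb⟩ | hb <;>
  rw [ha, hb] at hne hadj ⊢ <;> simp_all <;>
  first
    | (rcases hadj with ⟨rfl, h1⟩ | ⟨rfl, h1⟩ <;> simp_all)
    | (rcases hadj with ⟨rfl, rfl, h1⟩ | ⟨rfl, rfl, h1⟩ <;> simp_all)

set_option maxHeartbeats 1000000 in
lemma aux_key (shape : GoodShape G h F) :
    ∀ a b : ↥F, ((Gp G).induce F).Adj a b →
      mrank b.1.1 < mrank a.1.1 → b.1.1 = mpar h a.1.1 := by
  intro a b hab hlt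
  rw [induce_adj_iff] at hab
  obtain ⟨hne, hadj⟩ := hab
  have ha' := shape a
  have hb' := shape b
  clear shape
  rcases ha' with ⟨i, ha⟩ | ⟨i, j, hij, ha⟩ | ⟨i, ha⟩ | ⟨i, ha⟩ |
    ⟨i, j, hij, ha⟩ | ⟨i, j, hij, ha⟩ | ha <;>
  rcases hb' with ⟨i', hb⟩ | ⟨i', j', hij', hb⟩ | ⟨i', hb⟩ | ⟨i', hb⟩ |
    ⟨i', j', hij', hb⟩ | ⟨i', j', hij', hb⟩ | hb <;>
  rw [ha, hb] at hne hadj hlt ⊢ <;> simp_all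

lemma aux_acyclic (shape : GoodShape G h F) : ((Gp G).induce F).IsAcyclic := by
  have ext2 : ∀ a b : ↥F, a.1.1 = b.1.1 → a = b :=
    fun a b hab => Subtype.ext (Subtype.ext hab)
  exact acyclic_of_rank (fun a => mrank a.1.1) (aux_hdiff shape)
    (fun u v w huv huw hv hw =>
      ext2 _ _ ((aux_key shape u v huv hv).trans (aux_key shape u w huw hw).symm))

set_option maxHeartbeats 1000000 in
lemma aux_connected (hcl : ∀ i j : Fin k, i ≠ j → G.Adj (i, h i) (j, h j))
    (shape : GoodShape G h F)
    (hbmem : (⟨MV.beta, ⟨⟩⟩ : MVert k p G) ∈ F)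
    (hzmem : ∀ i : Fin k, (⟨MV.z i (h i), ⟨⟩⟩ : MVert k p G) ∈ F)
    (hrmem : ∀ i j : Fin k, (hij : i < j) →
      (⟨MV.r i j (h i) (h j), ⟨hij, hcl i j (ne_of_lt hij)⟩⟩ : MVert k p G) ∈ F) :
    ((Gp G).induce F).Connected := by
  have ext2 : ∀ a b : ↥F, a.1.1 = b.1.1 → a = b :=
    fun a b hab => Subtype.ext (Subtype.ext hab)
  set b0 : ↥F := ⟨⟨MV.beta, ⟨⟩⟩, hbmem⟩ with hb0
  have hb0v : b0.1.1 = MV.beta := rfl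
  have hreach : ∀ a : ↥F, ((Gp G).induce F).Reachable a b0 := by
    intro a
    rcases shape a with ⟨i, ha⟩ | ⟨i, j, hij, ha⟩ | ⟨i, ha⟩ | ⟨i, ha⟩ |
      ⟨i, j, hij, ha⟩ | ⟨i, j, hij, ha⟩ | ha
    · exact ⟨((induce_adj_iff a b0).mpr (by rw [ha, hb0v]; simp)).toWalk⟩
    · exact ⟨((induce_adj_iff a b0).mpr (by rw [ha, hb0v]; simp)).toWalk⟩
    · refine ⟨Walk.cons ((induce_adj_iff a ⟨⟨MV.z i (h i), ⟨⟩⟩, hzmem i⟩).mpr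
        (by rw [ha]; simp)) ?_⟩
      exact ((induce_adj_iff ⟨⟨MV.z i (h i), ⟨⟩⟩, hzmem i⟩ b0).mpr (by simp [hb0v])).toWalk
    · refine ⟨Walk.cons ((induce_adj_iff a ⟨⟨MV.z i (h i), ⟨⟩⟩, hzmem i⟩).mpr
        (by rw [ha]; simp)) ?_⟩
      exact ((induce_adj_iff ⟨⟨MV.z i (h i), ⟨⟩⟩, hzmem i⟩ b0).mpr (by simp [hb0v])).toWalk
    · refine ⟨Walk.cons ((induce_adj_iff a
        ⟨⟨MV.r i j (h i) (h j), ⟨hij, hcl i j (ne_of_lt hij)⟩⟩, hrmem i j hij⟩).mpr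
        (by rw [ha]; simp)) ?_⟩
      exact ((induce_adj_iff ⟨⟨MV.r i j (h i) (h j), ⟨hij, hcl i j (ne_of_lt hij)⟩⟩,
        hrmem i j hij⟩ b0).mpr (by simp [hb0v])).toWalk
    · refine ⟨Walk.cons ((induce_adj_iff a
        ⟨⟨MV.r i j (h i) (h j), ⟨hij, hcl i j (ne_of_lt hij)⟩⟩, hrmem i j hij⟩).mpr
        (by rw [ha]; simp)) ?_⟩
      exact ((induce_adj_iff ⟨⟨MV.r i j (h i) (h j), ⟨hij, hcl i j (ne_of_lt hij)⟩⟩,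
        hrmem i j hij⟩ b0).mpr (by simp [hb0v])).toWalk
    · rw [ext2 a b0 (by rw [ha])]
  have : Nonempty ↥F := ⟨b0⟩
  exact ⟨fun a b => (hreach a).trans (hreach b).symm⟩

end StructureLemmas

set_option maxHeartbeats 1000000 in
theorem stmt1 (k p : ℕ) (hk : 2 ≤ k) (hp : 1 ≤ p) (G : SimpleGraph (Fin k × Fin p))
    (h : Fin k → Fin p) (hcl : ∀ i j : Fin k, i ≠ j → G.Adj (i, h i) (j, h j)) :
    ∀ F : Set (MVert k p G),
      F = {v | ∃ i, v.1 = MV.z i (h i)} ∪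
          {v | ∃ i j : Fin k, i < j ∧ v.1 = MV.r i j (h i) (h j)} ∪
          Aset G ∪ {v | v.1 = MV.beta} →
      F.ncard = 3 * k + 3 * Nat.choose k 2 + 1 ∧ ((Gp G).induce F).IsTree := by
  intro F hF
  classical
  have hcl' : ∀ q : Spair k, G.Adj (q.1.1, h q.1.1) (q.1.2, h q.1.2) :=
    fun q => hcl q.1.1 q.1.2 (ne_of_lt q.2)
  have hF' : ∀ x : MVert k p G, x ∈ F ↔ x ∈
      ({v | ∃ i, v.1 = MV.z i (h i)} ∪
        {v | ∃ i j : Fin k, i < j ∧ v.1 = MV.r i j (h i) (h j)} ∪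
        Aset G ∪ {v | v.1 = MV.beta} : Set (MVert k p G)) := fun x => by rw [hF]
  clear hF
  have shape : GoodShape G h F := by
    intro v
    have hv := (hF' v.1).mp v.2
    rcases hv with ((⟨i, hi⟩ | ⟨i, j, hij, hr⟩) | ha) | hb
    · exact Or.inl ⟨i, hi⟩
    · exact Or.inr (Or.inl ⟨i, j, hij, hr⟩)
    · rcases ha with ⟨i, hi | hi⟩ | ⟨i, j, hb | hb⟩
      · exact Or.inr (Or.inr (Or.inl ⟨i, hi⟩))
      · exact Or.inr (Or.inr (Or.inr (Or.inl ⟨i, hi⟩)))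
      · have hij : i < j := by have hv2 := v.1.2; rw [hb] at hv2; exact hv2
        exact Or.inr (Or.inr (Or.inr (Or.inr (Or.inl ⟨i, j, hij, hb⟩))))
      · have hij : i < j := by have hv2 := v.1.2; rw [hb] at hv2; exact hv2
        exact Or.inr (Or.inr (Or.inr (Or.inr (Or.inr (Or.inl ⟨i, j, hij, hb⟩)))))
    · exact Or.inr (Or.inr (Or.inr (Or.inr (Or.inr (Or.inr hb)))))
  refine ⟨?_, ?_, ?_⟩
  · -- cardinality
    have ginj : Function.Injective (gfun G h hcl') := gfun_injective G h hcl'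
    have hrange : F = Set.range (gfun G h hcl') := by
      apply Set.ext; intro v
      constructor
      · intro hv
        rw [hF' v] at hv
        rcases hv with ((⟨i, hi⟩ | ⟨i, j, hij, hr⟩) | ha) | hb
        · exact ⟨Sum.inl (Sum.inl i), Subtype.ext hi.symm⟩
        · exact ⟨Sum.inr (Sum.inl (Sum.inl ⟨(i, j), hij⟩)), Subtype.ext hr.symm⟩
        · rcases ha with ⟨i, hi | hi⟩ | ⟨i, j, hb | hb⟩
          · exact ⟨Sum.inl (Sum.inr (Sum.inl i)), Subtype.ext hi.symm⟩
          · exact ⟨Sum.inl (Sum.inr (Sum.inr i)), Subtype.ext hi.symm⟩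
          · have hij : i < j := by have hv2 := v.2; rw [hb] at hv2; exact hv2
            exact ⟨Sum.inr (Sum.inl (Sum.inr (Sum.inl ⟨(i, j), hij⟩))), Subtype.ext hb.symm⟩
          · have hij : i < j := by have hv2 := v.2; rw [hb] at hv2; exact hv2
            exact ⟨Sum.inr (Sum.inl (Sum.inr (Sum.inr ⟨(i, j), hij⟩))), Subtype.ext hb.symm⟩
        · exact ⟨Sum.inr (Sum.inr PUnit.unit), Subtype.ext hb.symm⟩
      · rintro ⟨t, rfl⟩
        rw [hF' _]
        rcases t with (i | i | i) | (q | q | q) | u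
        · exact Or.inl (Or.inl (Or.inl ⟨i, rfl⟩))
        · exact Or.inl (Or.inr (Or.inl ⟨i, Or.inl rfl⟩))
        · exact Or.inl (Or.inr (Or.inl ⟨i, Or.inr rfl⟩))
        · exact Or.inl (Or.inl (Or.inr ⟨q.1.1, q.1.2, q.2, rfl⟩))
        · exact Or.inl (Or.inr (Or.inr ⟨q.1.1, q.1.2, Or.inl rfl⟩))
        · exact Or.inl (Or.inr (Or.inr ⟨q.1.1, q.1.2, Or.inr rfl⟩))
        · exact Or.inr rfl
    calc F.ncard = Nat.card F := (Nat.card_coe_set_eq F).symm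
      _ = Nat.card (Set.range (gfun G h hcl')) := by rw [hrange]
      _ = Nat.card (Tidx k) := Nat.card_range_of_injective ginj
      _ = Fintype.card (Tidx k) := Nat.card_eq_fintype_card
      _ = 3 * k + 3 * Nat.choose k 2 + 1 := card_Tidx k
  · -- connected
    exact aux_connected hcl shape ((hF' _).mpr (Or.inr rfl))
      (fun i => (hF' _).mpr (Or.inl (Or.inl (Or.inl ⟨i, rfl⟩))))
      (fun i j hij => (hF' _).mpr (Or.inl (Or.inl (Or.inr ⟨i, j, hij, rfl⟩))))
  · -- acyclic
    exact aux_acyclic shape
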